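/- Let y ∈ (0,1) and 0 < n̲ < n̄, and define the likelihood ratio L(l) = p(l | y, n̄, m, s, N) / p(l | y, n̲, m, s, N) for l ∈ {0,…,m}. If L(0) ≤ 1 and L(m) ≥ 1, then the Beta-Binomial distribution with prior strength n̄ first-order stochastically dominates the one with prior strength n̲; and if L(0) ≥ 1 and L(m) ≤ 1, then the Beta-Binomial distribution with prior strength n̲ first-order stochastically dominates the one with prior strength n̄. -/

import Mathlib

set_option linter.unusedSectionVars false
set_option linter.deprecated false
set_option linter.unusedVariables false


/-- The Euler Beta function `B(a,b) = Γ(a)Γ(b)/Γ(a+b)`. -/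
noncomputable def eulerBeta (a b : ℝ) : ℝ := Real.Gamma a * Real.Gamma b / Real.Gamma (a + b)

/-- The Beta-Binomial probability mass function
`p(l ∣ y, n, m, s, N) = C(m,l) · B(l + ny + s, m − l + n(1−y) + N − s) / B(ny + s, n(1−y) + N − s)`. -/
noncomputable def bbPmf (y n : ℝ) (m s N : ℕ) (l : ℕ) : ℝ :=
  (m.choose l : ℝ) *
    eulerBeta ((l : ℝ) + n * y + s) ((m : ℝ) - l + n * (1 - y) + N - s) /
    eulerBeta (n * y + s) (n * (1 - y) + N - s)

lemma eulerBeta_pos {a b : ℝ} (ha : 0 < a) (hb : 0 < b) : 0 < eulerBeta a b := by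
  unfold eulerBeta
  have h1 := Real.Gamma_pos_of_pos ha
  have h2 := Real.Gamma_pos_of_pos hb
  have h3 := Real.Gamma_pos_of_pos (add_pos ha hb)
  positivity

lemma eulerBeta_rec {a b : ℝ} (ha : 0 < a) (hb : 0 < b) :
    eulerBeta (a+1) b + eulerBeta a (b+1) = eulerBeta a b := by
  unfold eulerBeta
  have h1 : Real.Gamma (a+1) = a * Real.Gamma a := Real.Gamma_add_one ha.ne'
  have h2 : Real.Gamma (b+1) = b * Real.Gamma b := Real.Gamma_add_one hb.ne'
  have h3 : Real.Gamma (a+b+1) = (a+b) * Real.Gamma (a+b) := Real.Gamma_add_one (by positivity)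
  have e1 : a + 1 + b = a + b + 1 := by ring
  have e2 : a + (b+1) = a + b + 1 := by ring
  rw [e1, e2, h1, h2, h3]
  have h4 : Real.Gamma (a+b) ≠ 0 := (Real.Gamma_pos_of_pos (by positivity)).ne'
  have h5 : a + b ≠ 0 := by positivity
  field_simp

lemma eulerBeta_swap_succ {x y : ℝ} (hx : x ≠ 0) (hy : y ≠ 0) :
    y * eulerBeta (x+1) y = x * eulerBeta x (y+1) := by
  unfold eulerBeta
  rw [Real.Gamma_add_one hx, Real.Gamma_add_one hy]
  have e : x + 1 + y = x + (y + 1) := by ring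
  rw [e]
  ring

lemma sum_choose_beta (a b : ℝ) (ha : 0 < a) (hb : 0 < b) (m : ℕ) :
    ∑ l ∈ Finset.range (m+1),
      (m.choose l : ℝ) * eulerBeta (a + l) (b + m - l) = eulerBeta a b := by
  induction m with
  | zero => norm_num
  | succ m ih =>
    set g : ℕ → ℝ := fun l => (m.choose l : ℝ) * eulerBeta (a + l) ((b + m - l) + 1) with hg
    rw [Finset.sum_range_succ']
    have step1 : ∀ l ∈ Finset.range (m+1),
        ((m+1).choose (l+1) : ℝ) * eulerBeta (a + ↑(l+1)) (b + ↑(m+1) - ↑(l+1))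
        = (m.choose l : ℝ) * eulerBeta ((a + l) + 1) (b + m - l) + g (l+1) := by
      intro l hl
      rw [hg]
      simp only []
      rw [Nat.choose_succ_succ]
      push_cast
      have e1 : a + (↑l + 1) = a + ↑l + 1 := by ring
      have e2 : b + (↑m + 1) - (↑l + 1) = b + ↑m - ↑l := by ring
      have e3 : b + ↑m - (↑l + 1) + 1 = b + ↑m - ↑l := by ring
      rw [e1, e2, e3]
      ring
    rw [Finset.sum_congr rfl step1, Finset.sum_add_distrib, add_assoc]
    have hf0 : ((m+1).choose 0 : ℝ) * eulerBeta (a + ↑(0:ℕ)) (b + ↑(m+1) - ↑(0:ℕ)) = g 0 := by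
      rw [hg]
      simp only []
      have e : b + ↑(m+1) - ↑(0:ℕ) = (b + ↑m - ↑(0:ℕ)) + 1 := by push_cast; ring
      rw [e]
      norm_num
    rw [hf0]
    have key2 : ∑ l ∈ Finset.range (m+1), g (l+1) + g 0 = ∑ l ∈ Finset.range (m+1), g l := by
      have h1 := Finset.sum_range_succ' g (m+1)
      have h2 := Finset.sum_range_succ g (m+1)
      have h3 : g (m+1) = 0 := by
        rw [hg]; simp [Nat.choose_succ_self]
      rw [h2, h3, add_zero] at h1
      linarith [h1]
    rw [key2, ← Finset.sum_add_distrib]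
    rw [← ih]
    apply Finset.sum_congr rfl
    intro l hl
    rw [hg]
    simp only []
    rw [← mul_add, eulerBeta_rec (by positivity) ?hy]
    case hy =>
      have hlm : (l:ℝ) ≤ m := by exact_mod_cast Nat.le_of_lt_succ (Finset.mem_range.1 hl)
      linarith

lemma bbPmf_eq (y n : ℝ) (m s N l : ℕ) :
    bbPmf y n m s N l = (m.choose l : ℝ) *
      eulerBeta ((n*y+s) + l) ((n*(1-y)+N-s) + m - l) / eulerBeta (n*y+s) (n*(1-y)+N-s) := by
  unfold bbPmf
  have e1 : (l:ℝ) + n*y + s = (n*y+s) + l := by ring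
  have e2 : (m:ℝ) - l + n*(1-y) + N - s = (n*(1-y)+N-s) + m - l := by ring
  rw [e1, e2]

section
variable {y n : ℝ} {m s N : ℕ}
variable (hy0 : 0 < y) (hy1 : y < 1) (hn : 0 < n) (hsN : s ≤ N)

include hy0 hy1 hn hsN

lemma ha_pos : 0 < n*y + s := by positivity

lemma hb_pos : 0 < n*(1-y) + N - s := by
  have h1 : 0 < n * (1 - y) := by nlinarith
  have h2 : (s:ℝ) ≤ N := by exact_mod_cast hsN
  linarith

lemma bbPmf_pos {l : ℕ} (hl : l ≤ m) : 0 < bbPmf y n m s N l := by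
  rw [bbPmf_eq]
  have ha := ha_pos (n := n) (s := s) hy0 hy1 hn hsN
  have hb := hb_pos (n := n) (N := N) (s := s) hy0 hy1 hn hsN
  have hc : 0 < (m.choose l : ℝ) := by exact_mod_cast Nat.choose_pos hl
  have hml : (l:ℝ) ≤ m := by exact_mod_cast hl
  have h1 := eulerBeta_pos (a := (n*y+s) + l) (b := (n*(1-y)+N-s) + m - l)
    (by positivity) (by linarith)
  have h2 := eulerBeta_pos ha hb
  positivity

lemma bbPmf_sum : ∑ l ∈ Finset.range (m+1), bbPmf y n m s N l = 1 := by
  have ha := ha_pos (n := n) (s := s) hy0 hy1 hn hsN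
  have hb := hb_pos (n := n) (N := N) (s := s) hy0 hy1 hn hsN
  have : ∀ l ∈ Finset.range (m+1), bbPmf y n m s N l =
      (m.choose l : ℝ) * eulerBeta ((n*y+s) + l) ((n*(1-y)+N-s) + m - l)
        / eulerBeta (n*y+s) (n*(1-y)+N-s) := fun l _ => bbPmf_eq y n m s N l
  rw [Finset.sum_congr rfl this, ← Finset.sum_div, sum_choose_beta _ _ ha hb,
    div_self (eulerBeta_pos ha hb).ne']

lemma bbPmf_ratio {l : ℕ} (hl : l < m) :
    bbPmf y n m s N (l+1) * (((l:ℝ)+1) * ((n*(1-y)+N-s) + m - l - 1)) =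
    bbPmf y n m s N l * (((m:ℝ) - l) * ((n*y+s) + l)) := by
  have ha := ha_pos (n := n) (s := s) hy0 hy1 hn hsN
  have hb := hb_pos (n := n) (N := N) (s := s) hy0 hy1 hn hsN
  rw [bbPmf_eq, bbPmf_eq]
  set a := n*y+s with hadef
  set b := n*(1-y)+N-s with hbdef
  have hml : (l:ℝ) + 1 ≤ m := by exact_mod_cast hl
  have hyy : (0:ℝ) < b + m - l - 1 := by linarith
  have hx : (0:ℝ) < a + l := by positivity
  have hchoose : (m.choose (l+1) : ℝ) * ((l:ℝ)+1) = (m.choose l : ℝ) * ((m:ℝ) - l) := by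
    have h : ((m.choose (l+1) : ℕ) : ℝ) * (((l:ℝ)+1)) = (m.choose l : ℝ) * (((m - l : ℕ)) : ℝ) := by
      exact_mod_cast congrArg (fun t : ℕ => (t : ℝ)) (Nat.choose_succ_right_eq m l)
    rwa [Nat.cast_sub hl.le] at h
  have hswap := eulerBeta_swap_succ (x := a + l) (y := b + m - l - 1) hx.ne' hyy.ne'
  have e1 : a + ↑(l+1) = (a + ↑l) + 1 := by push_cast; ring
  have e2 : b + ↑m - ↑(l+1) = b + ↑m - ↑l - 1 := by push_cast; ring
  have e3 : b + ↑m - ↑l = (b + ↑m - ↑l - 1) + 1 := by ring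
  rw [← e3] at hswap
  rw [e1, e2]
  linear_combination (eulerBeta (a + ↑l + 1) (b + ↑m - ↑l - 1) * (b + ↑m - ↑l - 1) / eulerBeta a b) * hchoose
    + ((m.choose l : ℝ) * ((m:ℝ) - l) / eulerBeta a b) * hswap

end

lemma step_iff_abstract {p1 p0 q1 q0 da db na nb : ℝ}
    (hp0 : 0 < p0) (hq0 : 0 < q0) (hda : 0 < da) (hdb : 0 < db)
    (hR1 : p1 * da = p0 * na) (hR2 : q1 * db = q0 * nb) :
    p1 * q0 ≤ p0 * q1 ↔ na * db ≤ nb * da := by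
  constructor
  · intro H
    have H2 : (p0*q0)*(na*db) ≤ (p0*q0)*(nb*da) := by
      calc (p0*q0)*(na*db) = (p1*q0)*(da*db) := by linear_combination (-(q0*db))*hR1
        _ ≤ (p0*q1)*(da*db) := mul_le_mul_of_nonneg_right H (by positivity)
        _ = (p0*q0)*(nb*da) := by linear_combination (p0*da)*hR2
    exact le_of_mul_le_mul_left H2 (by positivity)
  · intro H
    have H5 : (p1*q0)*(da*db) ≤ (p0*q1)*(da*db) := by
      calc (p1*q0)*(da*db) = (p0*q0)*(na*db) := by linear_combination (q0*db)*hR1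
        _ ≤ (p0*q0)*(nb*da) := mul_le_mul_of_nonneg_left H (by positivity)
        _ = (p0*q1)*(da*db) := by linear_combination (-(p0*da))*hR2
    exact le_of_mul_le_mul_right H5 (by positivity)

lemma bb_step_iff {y n1 n2 : ℝ} {m s N : ℕ}
    (hy0 : 0 < y) (hy1 : y < 1) (hn1 : 0 < n1) (hn2 : 0 < n2) (hsN : s ≤ N)
    {l : ℕ} (hl : l < m) :
    bbPmf y n1 m s N (l+1) * bbPmf y n2 m s N l ≤ bbPmf y n1 m s N l * bbPmf y n2 m s N (l+1)
    ↔ ((n1*y+s) + l) * ((n2*(1-y)+N-s) + m - l - 1)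
        ≤ ((n2*y+s) + l) * ((n1*(1-y)+N-s) + m - l - 1) := by
  have R1 := bbPmf_ratio hy0 hy1 hn1 hsN hl
  have R2 := bbPmf_ratio hy0 hy1 hn2 hsN hl
  have hp0 := bbPmf_pos hy0 hy1 hn1 hsN hl.le
  have hq0 := bbPmf_pos hy0 hy1 hn2 hsN hl.le
  have hml : (l:ℝ) + 1 ≤ m := by exact_mod_cast hl
  have hb1 := hb_pos (n := n1) (N := N) (s := s) hy0 hy1 hn1 hsN
  have hb2 := hb_pos (n := n2) (N := N) (s := s) hy0 hy1 hn2 hsN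
  have ha1 := ha_pos (n := n1) (s := s) hy0 hy1 hn1 hsN
  have ha2 := ha_pos (n := n2) (s := s) hy0 hy1 hn2 hsN
  have hda : (0:ℝ) < ((l:ℝ)+1) * ((n1*(1-y)+N-s) + m - l - 1) := by
    apply mul_pos (by positivity); linarith
  have hdb : (0:ℝ) < ((l:ℝ)+1) * ((n2*(1-y)+N-s) + m - l - 1) := by
    apply mul_pos (by positivity); linarith
  rw [step_iff_abstract hp0 hq0 hda hdb R1 R2]
  have E3 : ((m:ℝ) - l) * ((n1*y+s) + l) * (((l:ℝ)+1) * ((n2*(1-y)+N-s) + m - l - 1))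
      = (((m:ℝ) - l) * ((l:ℝ)+1)) * (((n1*y+s) + l) * ((n2*(1-y)+N-s) + m - l - 1)) := by ring
  have E4 : ((m:ℝ) - l) * ((n2*y+s) + l) * (((l:ℝ)+1) * ((n1*(1-y)+N-s) + m - l - 1))
      = (((m:ℝ) - l) * ((l:ℝ)+1)) * (((n2*y+s) + l) * ((n1*(1-y)+N-s) + m - l - 1)) := by ring
  rw [E3, E4, mul_le_mul_iff_right₀ (by apply mul_pos (by linarith) (by positivity))]

lemma sum_split {f : ℕ → ℝ} {l m : ℕ} (h : l ≤ m) :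
    ∑ j ∈ Finset.range (m+1), f j =
      ∑ j ∈ Finset.range (l+1), f j + ∑ j ∈ Finset.Ico (l+1) (m+1), f j := by
  rw [Finset.range_eq_Ico, Finset.range_eq_Ico]
  exact (Finset.sum_Ico_consecutive f (Nat.zero_le (l+1)) (by omega)).symm

lemma dominance {P Q : ℕ → ℝ} {m k : ℕ}
    (hsum : ∑ j ∈ Finset.range (m+1), P j = ∑ j ∈ Finset.range (m+1), Q j)
    (h1 : ∀ l < k, P l ≤ Q l) (h2 : ∀ l, k ≤ l → l ≤ m → Q l ≤ P l) :
    ∀ l ≤ m, ∑ j ∈ Finset.range (l+1), P j ≤ ∑ j ∈ Finset.range (l+1), Q j := by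
  intro l hlm
  rcases le_or_gt (l+1) k with h | h
  · exact Finset.sum_le_sum fun j hj => h1 j (lt_of_lt_of_le (Finset.mem_range.1 hj) h)
  · have hs := sum_split (f := P) hlm
    have hs' := sum_split (f := Q) hlm
    have hIco : ∑ j ∈ Finset.Ico (l+1) (m+1), Q j ≤ ∑ j ∈ Finset.Ico (l+1) (m+1), P j := by
      refine Finset.sum_le_sum fun j hj => ?_
      obtain ⟨h1j, h2j⟩ := Finset.mem_Ico.1 hj
      exact h2 j (by omega) (by omega)
    linarith

lemma single_crossing {P Q : ℕ → ℝ} {m : ℕ}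
    (hP : ∀ l ≤ m, 0 < P l) (hQ : ∀ l ≤ m, 0 < Q l)
    (key : ∀ l j, l ≤ j → j + 1 ≤ m → P (l+1) * Q l ≤ P l * Q (l+1) →
      P (j+1) * Q j ≤ P j * Q (j+1))
    (h0 : P 0 ≤ Q 0) (hm : Q m ≤ P m) :
    ∃ k ≤ m, (∀ l < k, P l ≤ Q l) ∧ (∀ l, k ≤ l → l ≤ m → Q l ≤ P l) := by
  classical
  have hex : ∃ k, Q k ≤ P k ∧ k ≤ m := ⟨m, hm, le_rfl⟩
  obtain ⟨hkQP, hkm⟩ := Nat.find_spec hex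
  have hkmin : ∀ i, i < Nat.find hex → ¬(Q i ≤ P i ∧ i ≤ m) :=
    fun i h => Nat.find_min hex h
  refine ⟨Nat.find hex, hkm, fun l hl => ?_, fun l hkl hlm => ?_⟩
  · have h := hkmin l hl
    push_neg at h
    by_contra hcon
    push_neg at hcon
    exact absurd (h hcon.le) (by omega)
  · by_contra hbad
    push_neg at hbad
    have hex2 : ∃ i, (Nat.find hex ≤ i ∧ i ≤ m) ∧ P i < Q i := ⟨l, ⟨hkl, hlm⟩, hbad⟩
    obtain ⟨⟨hki0, hi0m⟩, hi0⟩ := Nat.find_spec hex2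
    have hmin2 : ∀ i, i < Nat.find hex2 → ¬((Nat.find hex ≤ i ∧ i ≤ m) ∧ P i < Q i) :=
      fun i h => Nat.find_min hex2 h
    have hk_lt : Nat.find hex < Nat.find hex2 := by
      rcases lt_or_eq_of_le hki0 with h | h
      · exact h
      · rw [← h] at hi0; exact absurd hkQP (not_le.2 hi0)
    obtain ⟨j0, hj0eq⟩ : ∃ j0, Nat.find hex2 = j0 + 1 := ⟨Nat.find hex2 - 1, by omega⟩
    rw [hj0eq] at hi0 hi0m hk_lt
    have hj0 : Q j0 ≤ P j0 := by
      have h := hmin2 j0 (by omega)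
      push_neg at h
      exact h ⟨by omega, by omega⟩
    have hstep : P (j0+1) * Q j0 ≤ P j0 * Q (j0+1) := by
      have hq0 := hQ j0 (by omega)
      have hq1 := hQ (j0+1) (by omega)
      nlinarith
    have mono : ∀ i, j0 + 1 ≤ i → i ≤ m → P i * Q (j0+1) ≤ Q i * P (j0+1) := by
      intro i hi him
      induction i, hi using Nat.le_induction with
      | base => nlinarith [hQ (j0+1) (by omega : j0+1 ≤ m), hP (j0+1) (by omega : j0+1 ≤ m)]
      | succ i hi ih =>
        have hi_le : i ≤ m := by omega
        have hih := ih hi_le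
        have hstep_i : P (i+1) * Q i ≤ P i * Q (i+1) := key j0 i (by omega) (by omega) hstep
        have hQi := hQ i (by omega)
        have hQi1 := hQ (i+1) (by omega)
        have hQj := hQ (j0+1) (by omega : j0+1 ≤ m)
        have hPj := hP (j0+1) (by omega : j0+1 ≤ m)
        have hPi := hP i (by omega)
        have r1 : P (i+1) / Q (i+1) ≤ P i / Q i := by
          rw [div_le_div_iff₀ hQi1 hQi]; linarith [hstep_i]
        have r2 : P i / Q i ≤ P (j0+1) / Q (j0+1) := by
          rw [div_le_div_iff₀ hQi hQj]; linarith [hih]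
        have r3 : P (i+1) / Q (i+1) ≤ P (j0+1) / Q (j0+1) := le_trans r1 r2
        rw [div_le_div_iff₀ hQi1 hQj] at r3
        linarith
    have hmQ := hQ m (le_refl m)
    have hmono := mono m (by omega) (le_refl m)
    nlinarith [hQ (j0+1) (by omega : j0+1 ≤ m), hP m le_rfl]

/-- Lemma 1: conditions on the likelihood ratio `L(l) = p(l ∣ y, n̄, ·)/p(l ∣ y, n̲, ·)` at the
endpoints `l = 0` and `l = m` which imply first-order stochastic dominance between the
Beta-Binomial distributions with prior strengths `n̄` and `n̲`. -/
theorem bbPmf_stochDom_strength_of_lr_endpoints (y nlo nhi : ℝ) (m s N : ℕ)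
    (hy0 : 0 < y) (hy1 : y < 1) (hn0 : 0 < nlo) (hn : nlo < nhi)
    (hm : 1 ≤ m) (hsN : s ≤ N) :
    (bbPmf y nhi m s N 0 / bbPmf y nlo m s N 0 ≤ 1 →
      1 ≤ bbPmf y nhi m s N m / bbPmf y nlo m s N m →
      ∀ l ≤ m, ∑ j ∈ Finset.range (l + 1), bbPmf y nhi m s N j ≤
        ∑ j ∈ Finset.range (l + 1), bbPmf y nlo m s N j) ∧
    (1 ≤ bbPmf y nhi m s N 0 / bbPmf y nlo m s N 0 →
      bbPmf y nhi m s N m / bbPmf y nlo m s N m ≤ 1 →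
      ∀ l ≤ m, ∑ j ∈ Finset.range (l + 1), bbPmf y nlo m s N j ≤
        ∑ j ∈ Finset.range (l + 1), bbPmf y nhi m s N j) := by
  have hnhi : 0 < nhi := lt_trans hn0 hn
  have hPpos : ∀ l ≤ m, 0 < bbPmf y nhi m s N l := fun l hl => bbPmf_pos hy0 hy1 hnhi hsN hl
  have hQpos : ∀ l ≤ m, 0 < bbPmf y nlo m s N l := fun l hl => bbPmf_pos hy0 hy1 hn0 hsN hl
  have hsumP := bbPmf_sum (n := nhi) (m := m) (s := s) (N := N) hy0 hy1 hnhi hsN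
  have hsumQ := bbPmf_sum (n := nlo) (m := m) (s := s) (N := N) hy0 hy1 hn0 hsN
  have hA : (0:ℝ) < (nhi*y+↑s) - (nlo*y+↑s) := by nlinarith
  have hB : (0:ℝ) < (nhi*(1-y)+↑N-↑s) - (nlo*(1-y)+↑N-↑s) := by nlinarith
  constructor
  · intro hL0 hLm
    have h0 : bbPmf y nhi m s N 0 ≤ bbPmf y nlo m s N 0 :=
      (div_le_one (hQpos 0 (by omega))).mp hL0
    have hmm : bbPmf y nlo m s N m ≤ bbPmf y nhi m s N m :=
      (one_le_div (hQpos m le_rfl)).mp hLm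
    have key : ∀ l j, l ≤ j → j + 1 ≤ m →
        bbPmf y nhi m s N (l+1) * bbPmf y nlo m s N l ≤
          bbPmf y nhi m s N l * bbPmf y nlo m s N (l+1) →
        bbPmf y nhi m s N (j+1) * bbPmf y nlo m s N j ≤
          bbPmf y nhi m s N j * bbPmf y nlo m s N (j+1) := by
      intro l j hlj hjm H
      rw [bb_step_iff hy0 hy1 hnhi hn0 hsN (by omega)] at H
      rw [bb_step_iff hy0 hy1 hnhi hn0 hsN (by omega)]
      have hcast : (l:ℝ) ≤ j := by exact_mod_cast hlj
      nlinarith [mul_nonneg (sub_nonneg.2 hcast) hA.le,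
                 mul_nonneg (sub_nonneg.2 hcast) hB.le]
    obtain ⟨k, hkm, h1, h2⟩ := single_crossing hPpos hQpos key h0 hmm
    exact dominance (by rw [hsumP, hsumQ]) h1 h2
  · intro hL0 hLm
    have h0 : bbPmf y nlo m s N 0 ≤ bbPmf y nhi m s N 0 :=
      (one_le_div (hQpos 0 (by omega))).mp hL0
    have hmm : bbPmf y nhi m s N m ≤ bbPmf y nlo m s N m :=
      (div_le_one (hQpos m le_rfl)).mp hLm
    have hP2 : ∀ l ≤ m, 0 < bbPmf y nhi m s N (m - l) := fun l _ => hPpos _ (by omega)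
    have hQ2 : ∀ l ≤ m, 0 < bbPmf y nlo m s N (m - l) := fun l _ => hQpos _ (by omega)
    have key2 : ∀ l j, l ≤ j → j + 1 ≤ m →
        bbPmf y nhi m s N (m - (l+1)) * bbPmf y nlo m s N (m - l) ≤
          bbPmf y nhi m s N (m - l) * bbPmf y nlo m s N (m - (l+1)) →
        bbPmf y nhi m s N (m - (j+1)) * bbPmf y nlo m s N (m - j) ≤
          bbPmf y nhi m s N (m - j) * bbPmf y nlo m s N (m - (j+1)) := by
      intro l j hlj hjm H
      obtain ⟨u, hu⟩ : ∃ u, m - (l+1) = u := ⟨_, rfl⟩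
      have hu1 : m - l = u + 1 := by omega
      obtain ⟨v, hv⟩ : ∃ v, m - (j+1) = v := ⟨_, rfl⟩
      have hv1 : m - j = v + 1 := by omega
      have hvu : v ≤ u := by omega
      have hum : u < m := by omega
      have hvm : v < m := by omega
      rw [hu, hu1] at H
      rw [hv, hv1]
      have H' : bbPmf y nlo m s N (u+1) * bbPmf y nhi m s N u ≤
          bbPmf y nlo m s N u * bbPmf y nhi m s N (u+1) := by
        rw [mul_comm, mul_comm (bbPmf y nlo m s N u)]; exact H
      rw [bb_step_iff hy0 hy1 hn0 hnhi hsN hum] at H'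
      have goal' : bbPmf y nlo m s N (v+1) * bbPmf y nhi m s N v ≤
          bbPmf y nlo m s N v * bbPmf y nhi m s N (v+1) := by
        rw [bb_step_iff hy0 hy1 hn0 hnhi hsN hvm]
        have hcast : (v:ℝ) ≤ u := by exact_mod_cast hvu
        nlinarith [mul_nonneg (sub_nonneg.2 hcast) hA.le,
                   mul_nonneg (sub_nonneg.2 hcast) hB.le]
      rw [mul_comm, mul_comm (bbPmf y nhi m s N (v+1))]
      exact goal'
    have h0' : bbPmf y nhi m s N (m - 0) ≤ bbPmf y nlo m s N (m - 0) := by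
      simpa using hmm
    have hmm' : bbPmf y nlo m s N (m - m) ≤ bbPmf y nhi m s N (m - m) := by
      simpa using h0
    obtain ⟨k, hkm, h1, h2⟩ := single_crossing hP2 hQ2 key2 h0' hmm'
    have h1' : ∀ j < m - k + 1, bbPmf y nlo m s N j ≤ bbPmf y nhi m s N j := by
      intro j hj
      have := h2 (m - j) (by omega) (by omega)
      rwa [show m - (m - j) = j from by omega] at this
    have h2' : ∀ j, m - k + 1 ≤ j → j ≤ m → bbPmf y nhi m s N j ≤ bbPmf y nlo m s N j := by
      intro j hj hjm
      have := h1 (m - j) (by omega)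
      rwa [show m - (m - j) = j from by omega] at this
    exact dominance (by rw [hsumP, hsumQ]) h1' h2'
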